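/- arXiv:2106.03554 — 3 statements merged into one kernel-verified Lean document; each statement's English description precedes it below -/
import Mathlib

section
/- In a free-choice net, expediting transitions is safe: if (N,M)[σ⟩(N,M') and σ' is obtained from σ by repeatedly moving some transition t_j from position j to an earlier position i, provided that (a) the prefix of length i-1 followed by t_j is enabled from M, and (b) no transition at positions i,...,j-1 belongs to the same cluster as t_j, then σ' is also enabled at M and leads to the same marking M'. -/
open scoped Classical

/-- A Petri net over places `P` and transitions `T`, given by preset and postset
of each transition (this encodes the flow relation `F`). -/
structure PetriNet (P T : Type) where
  pre : T → Finset P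
  post : T → Finset P

namespace PetriNet

variable {P T : Type} [DecidableEq P] (N : PetriNet P T)

/-- A transition is enabled if each input place holds at least one token. -/
def enabled (M : P → ℕ) (t : T) : Prop := ∀ p ∈ N.pre t, 1 ≤ M p

/-- Firing a transition. -/
def fire (M : P → ℕ) (t : T) : P → ℕ :=
  fun p => M p - (if p ∈ N.pre t then 1 else 0) + (if p ∈ N.post t then 1 else 0)

/-- `Fires M σ M'` : the firing sequence σ is enabled in M and leads to M'. -/
inductive Fires : (P → ℕ) → List T → (P → ℕ) → Prop
  | nil (M : P → ℕ) : Fires M [] M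
  | cons {M : P → ℕ} {t : T} {σ : List T} {M'' : P → ℕ} :
      N.enabled M t → Fires (N.fire M t) σ M'' → Fires M (t :: σ) M''

/-- Reachability of markings. -/
def Reach (M M' : P → ℕ) : Prop := ∃ σ : List T, N.Fires M σ M'

/-- The set of transitions enabled in a marking. -/
def en (M : P → ℕ) : Set T := {t | N.enabled M t}

/-- Lucency: reachable markings are determined by their sets of enabled transitions. -/
def Lucent (M : P → ℕ) : Prop :=
  ∀ M1 M2 : P → ℕ, N.Reach M M1 → N.Reach M M2 → N.en M1 = N.en M2 → M1 = M2

/-- Free-choice: presets of any two transitions are equal or disjoint. -/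
def FreeChoice : Prop :=
  ∀ t1 t2 : T, N.pre t1 = N.pre t2 ∨ N.pre t1 ∩ N.pre t2 = ∅

/-- Proper: every transition has a nonempty preset and postset. -/
def Proper : Prop := ∀ t : T, (N.pre t).Nonempty ∧ (N.post t).Nonempty

/-- The directed edge (flow) relation on nodes `P ⊕ T`. -/
def edge : (P ⊕ T) → (P ⊕ T) → Prop
  | Sum.inl p, Sum.inr t => p ∈ N.pre t
  | Sum.inr t, Sum.inl p => p ∈ N.post t
  | _, _ => False

/-- `InCluster x y` : y is in the cluster of x (smallest set containing x closed
under adding output transitions of places and input places of transitions). -/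
inductive InCluster : (P ⊕ T) → (P ⊕ T) → Prop
  | refl (x : P ⊕ T) : InCluster x x
  | toTrans {x : P ⊕ T} {p : P} {t : T} :
      InCluster x (Sum.inl p) → p ∈ N.pre t → InCluster x (Sum.inr t)
  | toPlace {x : P ⊕ T} {t : T} {p : P} :
      InCluster x (Sum.inr t) → p ∈ N.pre t → InCluster x (Sum.inl p)

/-- The cluster of a node. -/
def cluster (x : P ⊕ T) : Set (P ⊕ T) := {y | N.InCluster x y}

/-- A set of nodes is a cluster if it is the cluster of some node. -/
def IsCluster (C : Set (P ⊕ T)) : Prop := ∃ x : P ⊕ T, C = N.cluster x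

/-- `Mrk(C)` : one token on each place of `C`, no tokens elsewhere. -/
noncomputable def clusterMrk (C : Set (P ⊕ T)) : P → ℕ :=
  fun p => if Sum.inl p ∈ C then 1 else 0

/-- A home marking is reachable from every reachable marking. -/
def IsHomeMarking (M MH : P → ℕ) : Prop := ∀ M', N.Reach M M' → N.Reach M' MH

/-- A home cluster is a cluster whose marking `Mrk(C)` is a home marking. -/
def HomeCluster (M : P → ℕ) (C : Set (P ⊕ T)) : Prop :=
  N.IsCluster C ∧ N.IsHomeMarking M (clusterMrk C)

/-- A conflict-pair for `(N,M)`. -/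
def ConflictPair (M M1 M2 : P → ℕ) : Prop :=
  N.Reach M M1 ∧ N.Reach M M2 ∧
  (∃ t, N.enabled M1 t) ∧ (∃ t, N.enabled M2 t) ∧
  (∀ t, ¬ (N.enabled M1 t ∧ N.enabled M2 t)) ∧
  (∀ t, N.enabled M1 t → ∃ p ∈ N.pre t, 1 ≤ M2 p) ∧
  (∀ t, N.enabled M2 t → ∃ p ∈ N.pre t, 1 ≤ M1 p)

/-- A disentangled path `⟨p_1,t_1,p_2,…,t_{n-1},p_n⟩`, given by its lists of
places and transitions: consecutive nodes are connected by the flow relation and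
all places lie in pairwise distinct clusters. -/
def IsDisPath (ps : List P) (ts : List T) : Prop :=
  ps.length = ts.length + 1 ∧
  (∀ (i : ℕ) (t : T) (p p' : P), ts[i]? = some t → ps[i]? = some p →
      ps[i + 1]? = some p' → p ∈ N.pre t ∧ p' ∈ N.post t) ∧
  ps.Pairwise (fun a b => N.cluster (Sum.inl a) ≠ N.cluster (Sum.inl b))

/-- `Exp M σ σ'` : σ' is obtained from σ by repeatedly expediting transitions
(moving the transition at position j to an earlier position i, provided the
prefix of length i followed by that transition is enabled from M and no
transition at positions i..j-1 shares its cluster). -/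
inductive Exp (M : P → ℕ) (σ : List T) : List T → Prop
  | refl : Exp M σ σ
  | step {σ' : List T} {i j : ℕ} (h : Exp M σ σ') (hij : i < j) (hj : j < σ'.length)
      (ha : ∃ Mx, N.Fires M (σ'.take i ++ [σ'.get ⟨j, hj⟩]) Mx)
      (hb : ∀ (k : ℕ) (hk : k < σ'.length), i ≤ k → k < j →
        N.cluster (Sum.inr (σ'.get ⟨k, hk⟩)) ≠ N.cluster (Sum.inr (σ'.get ⟨j, hj⟩))) :
      Exp M σ ((σ'.eraseIdx j).insertIdx i (σ'.get ⟨j, hj⟩))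

/-- Liveness: from every reachable marking, every transition can be enabled again. -/
def Live (M : P → ℕ) : Prop :=
  ∀ M', N.Reach M M' → ∀ t : T, ∃ M'', N.Reach M' M'' ∧ N.enabled M'' t

/-- Boundedness. -/
def Bounded (M : P → ℕ) : Prop :=
  ∃ k, ∀ M', N.Reach M M' → ∀ p, M' p ≤ k

/-- Safety (1-boundedness). -/
def Safe (M : P → ℕ) : Prop := ∀ M', N.Reach M M' → ∀ p, M' p ≤ 1

end PetriNet


namespace PetriNet

variable {P T : Type} [DecidableEq P] {N : PetriNet P T}

lemma insertIdx_eq_take_cons_drop' {A : Type} (n : ℕ) (a : A) (l : List A) (h : n ≤ l.length) :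
    l.insertIdx n a = l.take n ++ a :: l.drop n := by
  induction l generalizing n with
  | nil =>
    simp only [List.length_nil, Nat.le_zero] at h
    subst h; simp
  | cons x xs ih =>
    cases n with
    | zero => simp [List.insertIdx_zero]
    | succ n => simp [List.insertIdx_succ_cons, ih n (by simpa using h)]

lemma fires_det {M : P → ℕ} {σ : List T} {M1 M2 : P → ℕ}
    (h1 : N.Fires M σ M1) (h2 : N.Fires M σ M2) : M1 = M2 := by
  induction h1 with
  | nil => cases h2; rfl
  | cons he hf ih => cases h2 with
    | cons he' hf' => exact ih hf'

lemma fires_append {M : P → ℕ} {α β : List T} {M' : P → ℕ} :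
    N.Fires M (α ++ β) M' ↔ ∃ Mm, N.Fires M α Mm ∧ N.Fires Mm β M' := by
  induction α generalizing M with
  | nil =>
    simp only [List.nil_append]
    constructor
    · intro h; exact ⟨M, Fires.nil M, h⟩
    · rintro ⟨Mm, h1, h2⟩; cases h1; exact h2
  | cons t α ih =>
    constructor
    · intro h
      cases h with
      | cons he hf =>
        obtain ⟨Mm, h1, h2⟩ := ih.mp hf
        exact ⟨Mm, Fires.cons he h1, h2⟩
    · rintro ⟨Mm, h1, h2⟩
      cases h1 with
      | cons he hf => exact Fires.cons he (ih.mpr ⟨Mm, hf, h2⟩)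

lemma cluster_eq_of_pre_eq {u t : T} (hpre : N.pre u = N.pre t)
    (hne : (N.pre u).Nonempty) :
    N.cluster (Sum.inr u) = N.cluster (Sum.inr t) := by
  obtain ⟨p, hp⟩ := hne
  have key : ∀ (a b : T), N.pre a = N.pre b → p ∈ N.pre a →
      ∀ z, N.InCluster (Sum.inr a) z → N.InCluster (Sum.inr b) z := by
    intro a b hab hpa z hz
    induction hz with
    | refl =>
      exact InCluster.toTrans (InCluster.toPlace (InCluster.refl _) (hab ▸ hpa)) hpa
    | toTrans h1 h2 ih => exact InCluster.toTrans ih h2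
    | toPlace h1 h2 ih => exact InCluster.toPlace ih h2
  ext z
  constructor
  · exact key u t hpre hp z
  · exact key t u hpre.symm (hpre ▸ hp) z

lemma pre_disjoint_of_cluster_ne (hfc : N.FreeChoice) {u t : T}
    (h : N.cluster (Sum.inr u) ≠ N.cluster (Sum.inr t)) {p : P}
    (hpu : p ∈ N.pre u) : p ∉ N.pre t := by
  intro hpt
  rcases hfc u t with heq | hdis
  · exact h (cluster_eq_of_pre_eq heq ⟨p, hpu⟩)
  · have : p ∈ N.pre u ∩ N.pre t := Finset.mem_inter.mpr ⟨hpu, hpt⟩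
    simp [hdis] at this

lemma enabled_fire_of_disjoint {M : P → ℕ} {u t : T}
    (hd : ∀ p, p ∈ N.pre u → p ∉ N.pre t) (het : N.enabled M t) :
    N.enabled (N.fire M u) t := by
  intro p hp
  have hpu : p ∉ N.pre u := fun hc => hd p hc hp
  have := het p hp
  simp only [fire, if_neg hpu]
  omega

lemma fire_comm {M : P → ℕ} {u t : T}
    (hd : ∀ p, p ∈ N.pre u → p ∉ N.pre t)
    (heu : N.enabled M u) (het : N.enabled M t) :
    N.fire (N.fire M u) t = N.fire (N.fire M t) u := by
  funext p
  simp only [fire]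
  by_cases h1 : p ∈ N.pre u
  · have h2 : p ∉ N.pre t := hd p h1
    have := heu p h1
    simp only [if_pos h1, if_neg h2]
    by_cases h3 : p ∈ N.post u <;> by_cases h4 : p ∈ N.post t <;>
      simp [h3, h4] <;> omega
  · simp only [if_neg h1]
    by_cases h2 : p ∈ N.pre t
    · have := het p h2
      simp only [if_pos h2]
      by_cases h3 : p ∈ N.post u <;> by_cases h4 : p ∈ N.post t <;>
        simp [h3, h4] <;> omega
    · simp only [if_neg h2]
      by_cases h3 : p ∈ N.post u <;> by_cases h4 : p ∈ N.post t <;>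
        simp [h3, h4] <;> omega

/-- Shift an enabled transition `t` to the front past transitions in other clusters. -/
lemma fires_shift (hfc : N.FreeChoice) {M M' : P → ℕ} {t : T} {β γ : List T}
    (het : N.enabled M t)
    (hcl : ∀ u ∈ β, N.cluster (Sum.inr u) ≠ N.cluster (Sum.inr t))
    (h : N.Fires M (β ++ t :: γ) M') :
    N.Fires M (t :: (β ++ γ)) M' := by
  induction β generalizing M with
  | nil => simpa using h
  | cons u β ih =>
    cases h with
    | cons heu hf =>
      have hd : ∀ p, p ∈ N.pre u → p ∉ N.pre t :=
        fun p hp => pre_disjoint_of_cluster_ne hfc (hcl u (by simp)) hp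
      have het' : N.enabled (N.fire M u) t := enabled_fire_of_disjoint hd het
      have h2 : N.Fires (N.fire M u) (t :: (β ++ γ)) M' :=
        ih het' (fun v hv => hcl v (by simp [hv])) hf
      cases h2 with
      | cons _ hf2 =>
        have heu' : N.enabled (N.fire M t) u := by
          intro p hp
          have hpt : p ∉ N.pre t := hd p hp
          have := heu p hp
          simp only [fire, if_neg hpt]
          omega
        have hcomm := fire_comm hd heu het
        refine Fires.cons het (Fires.cons heu' ?_)
        rw [← hcomm]
        exact hf2

end PetriNet

/-- Expediting transitions is safe in free-choice nets: any
sequence obtained from an enabled firing sequence by repeatedly expediting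
transitions is also enabled and leads to the same marking. -/
theorem expediting_is_safe {P T : Type} [DecidableEq P]
    (N : PetriNet P T) (hfc : N.FreeChoice) (M M' : P → ℕ) (s s' : List T)
    (h : N.Fires M s M') (he : N.Exp M s s') :
    N.Fires M s' M' := by
  induction he with
  | refl => exact h
  | @step σ' i j hexp hij hj ha hb ih =>
    set t := σ'.get ⟨j, hj⟩ with ht
    have htj : σ'[j] = t := rfl
    set α := σ'.take i with hα
    set β := (σ'.take j).drop i with hβ
    set γ := σ'.drop (j+1) with hγ
    have hlen : (σ'.take j).length = j := by
      simp [List.length_take, Nat.min_eq_left (le_of_lt hj)]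
    have hsplit : σ' = α ++ (β ++ t :: γ) := by
      have h1 : σ'.take j = α ++ β := by
        conv_lhs => rw [← List.take_append_drop i (σ'.take j)]
        rw [List.take_take, Nat.min_eq_left (le_of_lt hij)]
      have h2 : σ'.drop j = t :: γ := by
        rw [hγ, List.drop_eq_getElem_cons hj, htj]
      calc σ' = σ'.take j ++ σ'.drop j := (List.take_append_drop j σ').symm
        _ = α ++ (β ++ t :: γ) := by rw [h1, h2, List.append_assoc]
    have htarget : (σ'.eraseIdx j).insertIdx i t = α ++ t :: (β ++ γ) := by
      rw [List.eraseIdx_eq_take_drop_succ]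
      have hti : (σ'.take j ++ σ'.drop (j+1)).take i = α := by
        rw [List.take_append_of_le_length (by omega : i ≤ (σ'.take j).length),
          List.take_take, Nat.min_eq_left (le_of_lt hij)]
      have hdi : (σ'.take j ++ σ'.drop (j+1)).drop i = β ++ γ := by
        rw [List.drop_append_of_le_length (by omega : i ≤ (σ'.take j).length)]
      rw [PetriNet.insertIdx_eq_take_cons_drop' i t _ (by
        rw [List.length_append, hlen]
        have : (σ'.drop (j+1)).length = σ'.length - (j+1) := List.length_drop
        omega), hti, hdi]
    rw [hsplit] at ih
    obtain ⟨Mm, hMα, hMrest⟩ := PetriNet.fires_append.mp ih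
    obtain ⟨Mx, hMx⟩ := ha
    obtain ⟨Mm', hMα', hMt⟩ := PetriNet.fires_append.mp hMx
    have hMeq : Mm' = Mm := PetriNet.fires_det hMα' hMα
    have het : N.enabled Mm t := by
      subst hMeq; cases hMt with | cons he _ => exact he
    have hcl : ∀ u ∈ β, N.cluster (Sum.inr u) ≠ N.cluster (Sum.inr t) := by
      intro u hu
      obtain ⟨k, hk, hku⟩ := List.mem_iff_getElem.mp hu
      have hik : i + k < j := by
        have := hk
        simp [hβ, hlen] at this
        omega
      have hkl : i + k < σ'.length := lt_trans hik hj
      have : σ'[i + k] = u := by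
        rw [← hku]
        simp [hβ, List.getElem_drop, List.getElem_take]
      rw [← this]
      exact hb (i + k) hkl (Nat.le_add_right i k) hik
    have hshift : N.Fires Mm (t :: (β ++ γ)) M' := PetriNet.fires_shift hfc het hcl hMrest
    rw [htarget]
    exact PetriNet.fires_append.mpr ⟨Mm, hMα, hshift⟩
end

section
/- In a free-choice net, if there is a path from a place p to a place q that lies in a cluster C, then there is a C-rooted disentangled path starting in p, i.e., a path ⟨p_1,t_1,p_2,...,t_{n-1},p_n⟩ with p_1 = p, p_n ∈ C, and all places p_1,...,p_n lying in pairwise distinct clusters. -/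
open scoped Classical

namespace PetriNet

variable {P T : Type} [DecidableEq P] (N : PetriNet P T)

lemma inCluster_trans {x y z : P ⊕ T} (h1 : N.InCluster x y) (h2 : N.InCluster y z) :
    N.InCluster x z := by
  induction h2 with
  | refl => exact h1
  | toTrans _ ht ih => exact .toTrans ih ht
  | toPlace _ hp ih => exact .toPlace ih hp

/-- Auxiliary predicate for the free-choice cluster lemma. -/
def prePred (p : P) : (P ⊕ T) → Prop
  | Sum.inl p' => ∀ t, p' ∈ N.pre t → p ∈ N.pre t
  | Sum.inr t => p ∈ N.pre t

lemma inCluster_pre (hfc : N.FreeChoice) {p : P} {y : P ⊕ T}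
    (h : N.InCluster (Sum.inl p) y) : N.prePred p y := by
  induction h with
  | refl => exact fun _ ht => ht
  | toTrans _ ht ih => exact ih _ ht
  | toPlace h hp ih =>
    intro t hpt
    rename_i t' p'
    rcases hfc t t' with heq | hdis
    · rw [heq]; exact ih
    · have : p' ∈ N.pre t ∩ N.pre t' := Finset.mem_inter.mpr ⟨hpt, hp⟩
      rw [hdis] at this
      exact absurd this (Finset.notMem_empty _)

lemma cluster_eq_pre (hfc : N.FreeChoice) {p a : P}
    (h : N.cluster (Sum.inl p) = N.cluster (Sum.inl a)) {t : T}
    (ha : a ∈ N.pre t) : p ∈ N.pre t := by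
  have hin : N.InCluster (Sum.inl p) (Sum.inl a) := by
    have h0 : Sum.inl a ∈ N.cluster (Sum.inl a) := InCluster.refl _
    rw [← h] at h0; exact h0
  exact (N.inCluster_pre hfc hin) t ha

lemma cluster_eq_memC {C : Set (P ⊕ T)} (x : P ⊕ T) (hCx : C = N.cluster x) {p a : P}
    (h : N.cluster (Sum.inl p) = N.cluster (Sum.inl a)) (ha : Sum.inl a ∈ C) :
    Sum.inl p ∈ C := by
  subst hCx
  have h2 : N.InCluster (Sum.inl a) (Sum.inl p) := by
    have h0 : Sum.inl p ∈ N.cluster (Sum.inl p) := InCluster.refl _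
    rw [h] at h0; exact h0
  exact N.inCluster_trans ha h2

lemma isDisPath_singleton (p : P) : N.IsDisPath [p] [] := by
  refine ⟨rfl, ?_, by simp⟩
  intro i t p1 p2 hi
  simp at hi

lemma isDisPath_tail {a : P} {ps : List P} {t : T} {ts : List T}
    (h : N.IsDisPath (a :: ps) (t :: ts)) : N.IsDisPath ps ts := by
  obtain ⟨h1, h2, h3⟩ := h
  refine ⟨by simpa using h1, ?_, h3.of_cons⟩
  intro i t' p p' hi hp hp'
  exact h2 (i + 1) t' p p' (by simpa using hi) (by simpa using hp) (by simpa using hp')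

lemma trim (hfc : N.FreeChoice) {C : Set (P ⊕ T)} (x : P ⊕ T) (hCx : C = N.cluster x) :
    ∀ ps ts, N.IsDisPath ps ts →
      (∃ r, ps.getLast? = some r ∧ Sum.inl r ∈ C) →
      ∀ p a, a ∈ ps → N.cluster (Sum.inl p) = N.cluster (Sum.inl a) →
      ∃ ps' ts', N.IsDisPath ps' ts' ∧ ps'.head? = some p ∧
        ∃ r, ps'.getLast? = some r ∧ Sum.inl r ∈ C := by
  intro ps
  induction ps with
  | nil => intro ts _ _ p a ha; simp at ha
  | cons p₁ rest ihp =>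
    intro ts hdis hlast p a ha heq
    rcases List.mem_cons.1 ha with rfl | harest
    · -- a = p₁
      cases ts with
      | nil =>
        have hr : rest = [] := by
          have := hdis.1; simpa using List.length_eq_zero_iff.mp (by simpa using this)
        subst hr
        obtain ⟨r, hr1, hr2⟩ := hlast
        have hrp : r = a := by simpa using hr1.symm
        subst hrp
        exact ⟨[p], [], N.isDisPath_singleton p, rfl, p, by simp,
          N.cluster_eq_memC x hCx heq hr2⟩
      | cons t ts' =>
        have hlen := hdis.1
        cases rest with
        | nil => simp at hlen
        | cons p₂ rest' =>
          have hflow0 := hdis.2.1 0 t a p₂ (by simp) (by simp) (by simp)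
          have hpt : p ∈ N.pre t := N.cluster_eq_pre hfc heq hflow0.1
          refine ⟨p :: p₂ :: rest', t :: ts', ⟨by simpa using hdis.1, ?_, ?_⟩, rfl, ?_⟩
          · intro i t' q q' hi hq hq'
            cases i with
            | zero =>
              simp at hi hq hq'
              subst hi; subst hq; subst hq'
              exact ⟨hpt, hflow0.2⟩
            | succ i =>
              exact hdis.2.1 (i + 1) t' q q' (by simpa using hi) (by simpa using hq)
                (by simpa using hq')
          · have hpw := hdis.2.2
            rw [List.pairwise_cons] at hpw ⊢
            exact ⟨fun b hb => by rw [heq]; exact hpw.1 b hb, hpw.2⟩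
          · obtain ⟨r, hr1, hr2⟩ := hlast
            refine ⟨r, ?_, hr2⟩
            rw [List.getLast?_cons_cons] at hr1 ⊢
            exact hr1
    · -- a ∈ rest
      cases ts with
      | nil =>
        have hr : rest = [] := by
          have := hdis.1; simpa using List.length_eq_zero_iff.mp (by simpa using this)
        subst hr; simp at harest
      | cons t ts' =>
        refine ihp ts' (N.isDisPath_tail hdis) ?_ p a harest heq
        obtain ⟨r, hr1, hr2⟩ := hlast
        refine ⟨r, ?_, hr2⟩
        cases rest with
        | nil => simp at harest
        | cons p₂ rest' =>
          rw [List.getLast?_cons_cons] at hr1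
          exact hr1

lemma aux_rooted (hfc : N.FreeChoice) {C : Set (P ⊕ T)} (x : P ⊕ T) (hCx : C = N.cluster x) :
    ∀ n (l : List (P ⊕ T)), l.length ≤ n → ∀ p q : P, Sum.inl q ∈ C →
      l.Chain' N.edge → l.head? = some (Sum.inl p) → l.getLast? = some (Sum.inl q) →
      ∃ ps ts, N.IsDisPath ps ts ∧ ps.head? = some p ∧
        ∃ r, ps.getLast? = some r ∧ Sum.inl r ∈ C := by
  intro n
  induction n with
  | zero =>
    intro l hl p q _ _ hh _
    have : l = [] := List.length_eq_zero_iff.mp (Nat.le_zero.mp hl)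
    subst this; simp at hh
  | succ n ih =>
    intro l hl p q hq hch hh hlast
    cases l with
    | nil => simp at hh
    | cons x₀ l₁ =>
      have hx₀ : x₀ = Sum.inl p := by simpa using hh
      subst hx₀
      cases l₁ with
      | nil =>
        have hpq : Sum.inl p = Sum.inl (α := P) (β := T) q := by simpa using hlast
        have : p = q := by injection hpq
        subst this
        exact ⟨[p], [], N.isDisPath_singleton p, rfl, p, by simp, hq⟩
      | cons y l₂ =>
        unfold List.Chain' at hch
        rw [List.isChain_cons_cons] at hch
        obtain ⟨hedge1, hch1⟩ := hch
        cases y with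
        | inl p'' => simp [PetriNet.edge] at hedge1
        | inr t =>
          have hpt : p ∈ N.pre t := hedge1
          cases l₂ with
          | nil => simp at hlast
          | cons z l₃ =>
            rw [List.isChain_cons_cons] at hch1
            obtain ⟨hedge2, hch2⟩ := hch1
            cases z with
            | inr t'' => simp [PetriNet.edge] at hedge2
            | inl p' =>
              have hp't : p' ∈ N.post t := hedge2
              have hlen : (Sum.inl p' :: l₃ : List (P ⊕ T)).length ≤ n := by
                simp at hl ⊢; omega
              have hlast' : (Sum.inl p' :: l₃ : List (P ⊕ T)).getLast? =
                  some (Sum.inl q) := by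
                rw [List.getLast?_cons_cons, List.getLast?_cons_cons] at hlast
                exact hlast
              obtain ⟨ps, ts, hdis, hph, r, hpl, hrC⟩ :=
                ih (Sum.inl p' :: l₃) hlen p' q hq hch2 (by simp) hlast'
              by_cases hcase : ∃ a ∈ ps, N.cluster (Sum.inl p) = N.cluster (Sum.inl a)
              · obtain ⟨a, ha, heq⟩ := hcase
                exact N.trim hfc x hCx ps ts hdis ⟨r, hpl, hrC⟩ p a ha heq
              · push_neg at hcase
                cases ps with
                | nil => simp at hph
                | cons p₁ ps₀ =>
                  have hp₁ : p₁ = p' := by simpa using hph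
                  subst hp₁
                  refine ⟨p :: p₁ :: ps₀, t :: ts, ⟨by simpa using hdis.1, ?_, ?_⟩,
                    rfl, r, ?_, hrC⟩
                  · intro i t' q1 q2 hi hq1 hq2
                    cases i with
                    | zero =>
                      simp at hi hq1 hq2
                      subst hi; subst hq1; subst hq2
                      exact ⟨hpt, hp't⟩
                    | succ i =>
                      exact hdis.2.1 i t' q1 q2 (by simpa using hi) (by simpa using hq1)
                        (by simpa using hq2)
                  · rw [List.pairwise_cons]
                    exact ⟨fun b hb => hcase b hb, hdis.2.2⟩
                  · rw [List.getLast?_cons_cons]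
                    exact hpl

end PetriNet

/-- In a free-choice net, a path from a place p to a place q lying
in a cluster C yields a C-rooted disentangled path starting in p. -/
theorem exists_rooted_disentangled_path {P T : Type} [DecidableEq P]
    (N : PetriNet P T) (hfc : N.FreeChoice) (C : Set (P ⊕ T))
    (hC : N.IsCluster C) (p q : P) (hq : Sum.inl q ∈ C)
    (l : List (P ⊕ T)) (hl : l.Chain' N.edge)
    (hh : l.head? = some (Sum.inl p)) (hlast : l.getLast? = some (Sum.inl q)) :
    ∃ ps ts, N.IsDisPath ps ts ∧ ps.head? = some p ∧
      ∃ r, ps.getLast? = some r ∧ Sum.inl r ∈ C := by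
  obtain ⟨x, hCx⟩ := hC
  exact N.aux_rooted hfc x hCx l.length l le_rfl p q hq hl hh hlast
end

section
/- In a marked Petri net (N,M) with a conflict-pair (M1,M2), write M^agree for the greatest lower bound (pointwise minimum) of M1 and M2, and M1 = M^agree + D1, M2 = M^agree + D2. Then the submarkings M^agree, D1, and D2 are all non-empty, no transition is enabled in M^agree, and every transition enabled in M1 (respectively M2) has at least one input place marked in M^agree and at least one input place marked in D1 (respectively D2). -/
open scoped Classical

/-- Splitting a conflict-pair into agreement and disagreement
parts: with `M^agree = min(M1,M2)`, `D1 = M1 - M^agree`, `D2 = M2 - M^agree`,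
all three submarkings are non-empty, no transition is enabled in `M^agree`, and
every transition enabled in M1 (resp. M2) has an input place marked in
`M^agree` and an input place marked in D1 (resp. D2). -/
theorem conflict_pair_agree_disagree {P T : Type} [DecidableEq P]
    (N : PetriNet P T) (M M1 M2 : P → ℕ) (h : N.ConflictPair M M1 M2) :
    (∃ p, 1 ≤ min (M1 p) (M2 p)) ∧
    (∃ p, 1 ≤ M1 p - min (M1 p) (M2 p)) ∧
    (∃ p, 1 ≤ M2 p - min (M1 p) (M2 p)) ∧
    (∀ t, ¬ N.enabled (fun p => min (M1 p) (M2 p)) t) ∧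
    (∀ t, N.enabled M1 t →
      (∃ p ∈ N.pre t, 1 ≤ min (M1 p) (M2 p)) ∧
      (∃ p ∈ N.pre t, 1 ≤ M1 p - min (M1 p) (M2 p))) ∧
    (∀ t, N.enabled M2 t →
      (∃ p ∈ N.pre t, 1 ≤ min (M1 p) (M2 p)) ∧
      (∃ p ∈ N.pre t, 1 ≤ M2 p - min (M1 p) (M2 p))) := by
  obtain ⟨-, -, ⟨t1, ht1⟩, ⟨t2, ht2⟩, hdisj, h12, h21⟩ := h
  have key1 : ∀ t, N.enabled M1 t →
      (∃ p ∈ N.pre t, 1 ≤ min (M1 p) (M2 p)) ∧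
      (∃ p ∈ N.pre t, 1 ≤ M1 p - min (M1 p) (M2 p)) := by
    intro t ht
    constructor
    · obtain ⟨p, hp, hp2⟩ := h12 t ht
      exact ⟨p, hp, le_min (ht p hp) hp2⟩
    · by_contra hc
      push_neg at hc
      exact hdisj t ⟨ht, fun p hp => by
        have := hc p hp
        have h1 := ht p hp
        omega⟩
  have key2 : ∀ t, N.enabled M2 t →
      (∃ p ∈ N.pre t, 1 ≤ min (M1 p) (M2 p)) ∧
      (∃ p ∈ N.pre t, 1 ≤ M2 p - min (M1 p) (M2 p)) := by
    intro t ht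
    constructor
    · obtain ⟨p, hp, hp1⟩ := h21 t ht
      exact ⟨p, hp, le_min hp1 (ht p hp)⟩
    · by_contra hc
      push_neg at hc
      exact hdisj t ⟨fun p hp => by
        have := hc p hp
        have h1 := ht p hp
        omega, ht⟩
  refine ⟨?_, ?_, ?_, ?_, key1, key2⟩
  · obtain ⟨⟨p, hp, h1⟩, -⟩ := key1 t1 ht1
    exact ⟨p, h1⟩
  · obtain ⟨-, ⟨p, hp, h1⟩⟩ := key1 t1 ht1
    exact ⟨p, h1⟩
  · obtain ⟨-, ⟨p, hp, h1⟩⟩ := key2 t2 ht2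
    exact ⟨p, h1⟩
  · intro t ht
    exact hdisj t ⟨fun p hp => le_trans (ht p hp) (min_le_left _ _),
      fun p hp => le_trans (ht p hp) (min_le_right _ _)⟩
end
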